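/- Let E be a Banach space and A a φ-positive operator in E (densely defined with ‖(A + λ)^{-1}‖ ≤ M(1+|λ|)^{-1} for λ in the sector S_φ, 0 ≤ φ < π). For ξ ∈ ℝ and λ ∈ S_φ with ξ² + λ ∈ S_φ, define σ(ξ) = ξ²(A + ξ² + λ)^{-1}. Then σ ∈ C²(ℝ, B(E)) and there is a constant C, uniform in λ, such that ‖(1+|ξ|)^k (d/dξ)^k σ(ξ)‖_{B(E)} ≤ C for k = 0, 1, 2 and all ξ ∈ ℝ. -/

import Mathlib

noncomputable section

/-- The sector `S_φ = {λ ∈ ℂ : |arg λ| ≤ φ} ∪ {0}`. -/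
def Sector (φ : ℝ) : Set ℂ := {z | z = 0 ∨ |Complex.arg z| ≤ φ}

lemma sector_lower (φ : ℝ) (hφ0 : 0 ≤ φ) (hφπ : φ < Real.pi) {lam : ℂ}
    (hlam : lam ∈ Sector φ) (t : ℝ) (ht : 0 ≤ t) :
    Real.cos (φ/2) * t ≤ ‖(t:ℂ) + lam‖ := by
  have hc : 0 < Real.cos (φ/2) := by
    apply Real.cos_pos_of_mem_Ioo
    constructor <;> [linarith [Real.pi_pos]; linarith]
  have hc1 : Real.cos (φ/2) ≤ 1 := Real.cos_le_one _
  rcases eq_or_ne lam 0 with h0 | h0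
  · subst h0
    simp only [add_zero, Complex.norm_real, Real.norm_eq_abs, abs_of_nonneg ht]
    nlinarith
  · have harg : |lam.arg| ≤ φ := hlam.resolve_left h0
    set r := ‖lam‖ with hr
    have hrpos : 0 < r := norm_pos_iff.mpr h0
    have hre : r * Real.cos φ ≤ lam.re := by
      have hca := Complex.cos_arg h0
      have hcos : Real.cos φ ≤ Real.cos lam.arg := by
        rw [← Real.cos_abs lam.arg]
        apply Real.cos_le_cos_of_nonneg_of_le_pi (abs_nonneg _) hφπ.le harg
      calc r * Real.cos φ ≤ r * Real.cos lam.arg := by nlinarith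
        _ = lam.re := by rw [hca]; field_simp; rw [hr]; ring
    have hK : Real.cos (φ/2) ^ 2 = 1/2 + Real.cos φ / 2 := by
      have := Real.cos_sq (φ/2); rw [this]; ring_nf
    have hK1 : -1 ≤ Real.cos φ := Real.neg_one_le_cos φ
    have hnsq : ‖(t:ℂ) + lam‖^2 = t^2 + 2*t*lam.re + r^2 := by
      rw [Complex.sq_norm, Complex.normSq_apply]
      have h2 : r^2 = lam.re^2 + lam.im^2 := by
        rw [hr, Complex.sq_norm, Complex.normSq_apply]; ring
      simp only [Complex.add_re, Complex.add_im, Complex.ofReal_re, Complex.ofReal_im, zero_add]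
      nlinarith [h2]
    have hsq : (Real.cos (φ/2) * t)^2 ≤ ‖(t:ℂ) + lam‖^2 := by
      rw [hnsq, mul_pow, hK]
      nlinarith [mul_nonneg (by linarith [Real.cos_le_one φ] : (0:ℝ) ≤ 1 - Real.cos φ) (sq_nonneg (t - r)),
        mul_nonneg (by linarith : (0:ℝ) ≤ 1 + Real.cos φ) (sq_nonneg r),
        mul_nonneg (mul_nonneg ht hrpos.le) (by linarith : (0:ℝ) ≤ 1 + Real.cos φ),
        mul_nonneg ht (sub_nonneg.2 hre)]
    have h1 : 0 ≤ Real.cos (φ/2) * t := by positivity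
    exact (pow_le_pow_iff_left₀ h1 (norm_nonneg _) two_ne_zero).mp hsq

set_option maxHeartbeats 1600000 in
/-- if `A` is `φ`-positive in `E` (encoded by its resolvent family `R`, with
`R z = (A + z)⁻¹`, `‖R z‖ ≤ M (1+|z|)⁻¹` on `S_φ` and the resolvent identity), then for
`λ ∈ S_φ` such that `ξ² + λ ∈ S_φ` for all real `ξ`, the function
`σ(ξ) = ξ² (A + ξ² + λ)⁻¹` is `C²` and satisfies `‖(1+|ξ|)^k σ^{(k)}(ξ)‖ ≤ C` for
`k = 0, 1, 2`, with `C` uniform in `λ`. -/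
theorem resolvent_symbol_mikhlin_estimates
    (E : Type*) [NormedAddCommGroup E] [NormedSpace ℂ E] [CompleteSpace E]
    (φ M : ℝ) (hφ0 : 0 ≤ φ) (hφπ : φ < Real.pi) (hM : 0 < M)
    (R : ℂ → E →L[ℂ] E)
    (hRnorm : ∀ z ∈ Sector φ, ‖R z‖ ≤ M * (1 + ‖z‖)⁻¹)
    (hRes : ∀ z ∈ Sector φ, ∀ w ∈ Sector φ, R z - R w = (w - z) • ((R z).comp (R w))) :
    ∃ C : ℝ, 0 ≤ C ∧
      ∀ lam ∈ Sector φ, (∀ ξ : ℝ, ((ξ : ℂ) ^ 2 + lam) ∈ Sector φ) →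
        ContDiff ℝ 2 (fun ξ : ℝ => (ξ : ℂ) ^ 2 • R ((ξ : ℂ) ^ 2 + lam)) ∧
        ∀ k : ℕ, k ≤ 2 → ∀ ξ : ℝ,
          (1 + |ξ|) ^ k *
              ‖iteratedDeriv k (fun ξ : ℝ => (ξ : ℂ) ^ 2 • R ((ξ : ℂ) ^ 2 + lam)) ξ‖ ≤ C := by
  have hc : 0 < Real.cos (φ/2) := by
    apply Real.cos_pos_of_mem_Ioo
    constructor <;> [linarith [Real.pi_pos]; linarith]
  set c := Real.cos (φ/2) with hcdef
  set L : ℝ := 2 * M / c with hLdef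
  have hL0 : 0 < L := by positivity
  refine ⟨2*L + 10*L^2 + 8*L^3, by positivity, ?_⟩
  intro lam hlam hmem
  set f : ℝ → E →L[ℂ] E := fun ξ => R ((ξ:ℂ)^2 + lam) with hfdef
  have hfM : ∀ ξ : ℝ, ‖f ξ‖ ≤ M := by
    intro ξ
    refine (hRnorm _ (hmem ξ)).trans ?_
    have h1 : (1 + ‖(ξ:ℂ)^2+lam‖)⁻¹ ≤ 1 :=
      inv_le_one_of_one_le₀ (by linarith [norm_nonneg ((ξ:ℂ)^2+lam)])
    calc M * (1 + ‖(ξ:ℂ)^2+lam‖)⁻¹ ≤ M * 1 := by gcongr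
      _ = M := mul_one M
  have hL : ∀ ξ : ℝ, (1+|ξ|)^2 * ‖f ξ‖ ≤ L := by
    intro ξ
    have hN : c * ξ^2 ≤ ‖(ξ:ℂ)^2 + lam‖ := by
      have h := sector_lower φ hφ0 hφπ hlam (ξ^2) (sq_nonneg ξ)
      have e : ((ξ^2 : ℝ) : ℂ) = (ξ:ℂ)^2 := by push_cast; ring
      rwa [e] at h
    have hnf := hRnorm _ (hmem ξ)
    set N := ‖(ξ:ℂ)^2 + lam‖ with hNdef
    have hN0 : 0 ≤ N := norm_nonneg _
    have key : (1+|ξ|)^2 * (M * (1+N)⁻¹) ≤ L := by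
      have expand : (1+|ξ|)^2 * (M * (1+N)⁻¹) = ((1+|ξ|)^2 * M) / (1+N) := by
        rw [div_eq_mul_inv]; ring
      rw [expand, hLdef, div_le_div_iff₀ (by linarith) hc]
      have hc1 : c ≤ 1 := Real.cos_le_one _
      have ha : c*(1+|ξ|)^2 ≤ 2*(1+c*ξ^2) := by
        nlinarith [mul_nonneg hc.le (sq_nonneg (1-|ξ|)), abs_nonneg ξ, sq_abs ξ,
          mul_nonneg hc.le (sq_nonneg ξ)]
      nlinarith [hN, hM.le, mul_le_mul_of_nonneg_right ha hM.le]
    calc (1+|ξ|)^2*‖f ξ‖ ≤ (1+|ξ|)^2*(M*(1+N)⁻¹) :=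
          mul_le_mul_of_nonneg_left hnf (by positivity)
      _ ≤ L := key
  have hfid : ∀ x y : ℝ, f y - f x = (x^2 - y^2 : ℝ) • (f y * f x) := by
    intro x y
    have h := hRes _ (hmem y) _ (hmem x)
    have e : ((x:ℂ)^2+lam) - ((y:ℂ)^2+lam) = ((x^2-y^2 : ℝ) : ℂ) := by push_cast; ring
    rw [e, Complex.coe_smul] at h
    exact h
  have hfcont : Continuous f := by
    rw [continuous_iff_continuousAt]
    intro x
    rw [ContinuousAt, tendsto_iff_norm_sub_tendsto_zero]
    have hb : ∀ y : ℝ, ‖f y - f x‖ ≤ |x ^ 2 - y ^ 2| * (M * M) := by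
      intro y
      rw [hfid x y, norm_smul (x^2-y^2) (f y * f x), Real.norm_eq_abs]
      exact mul_le_mul_of_nonneg_left
        ((norm_mul_le _ _).trans (mul_le_mul (hfM y) (hfM x) (norm_nonneg _) hM.le))
        (abs_nonneg _)
    apply squeeze_zero (fun y => norm_nonneg _) hb
    have hcont : Continuous (fun y : ℝ => |x ^ 2 - y ^ 2| * (M * M)) :=
      ((continuous_const.sub (continuous_pow 2)).abs).mul continuous_const
    have h0 := hcont.tendsto x
    simpa using h0
  have hfd : ∀ x : ℝ, HasDerivAt f ((-(2*x)) • (f x * f x)) x := by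
    intro x
    rw [hasDerivAt_iff_tendsto_slope]
    have hev : (fun y => (-(x+y)) • (f y * f x)) =ᶠ[nhdsWithin x {x}ᶜ] slope f x := by
      filter_upwards [self_mem_nhdsWithin] with y hy
      have hyx : y - x ≠ 0 := sub_ne_zero.2 hy
      rw [slope_def_module, hfid x y, smul_smul]
      congr 1
      field_simp
      ring
    refine Filter.Tendsto.congr' hev ?_
    have hc1 : Continuous fun y : ℝ => (-(x+y)) • (f y * f x) := by
      exact ((continuous_const.add continuous_id).neg).smul (hfcont.mul continuous_const)
    have h2 := hc1.tendsto x
    have e : (-(x+x)) • (f x * f x) = (-(2*x)) • (f x * f x) := by rw [two_mul]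
    rw [e] at h2
    exact h2.mono_left nhdsWithin_le_nhds
  set g1 : ℝ → E →L[ℂ] E := fun ξ => f ξ * f ξ with hg1def
  set g2 : ℝ → E →L[ℂ] E := fun ξ => f ξ * (f ξ * f ξ) with hg2def
  set s0 : ℝ → E →L[ℂ] E := fun ξ => (ξ^2 : ℝ) • f ξ with hs0def
  set s1 : ℝ → E →L[ℂ] E := fun ξ => (2*ξ) • f ξ + (-(2*ξ^3)) • g1 ξ with hs1def
  set s2 : ℝ → E →L[ℂ] E := fun ξ => (2:ℝ) • f ξ + (-(10*ξ^2)) • g1 ξ + (8*ξ^4) • g2 ξ with hs2def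
  have hg1d : ∀ x : ℝ, HasDerivAt g1 ((-(4*x)) • g2 x) x := by
    intro x
    have h := (hfd x).mul (hfd x)
    have e : (-(4*x)) • g2 x =
        ((-(2*x)) • (f x * f x)) * f x + f x * ((-(2*x)) • (f x * f x)) := by
      simp only [hg2def, smul_mul_assoc, mul_smul_comm, mul_assoc]
      module
    rw [e]
    exact h
  have hs0d : ∀ x : ℝ, HasDerivAt s0 (s1 x) x := by
    intro x
    have h := (hasDerivAt_pow 2 x).smul (hfd x)
    have e : s1 x = (x^2 : ℝ) • ((-(2*x)) • (f x * f x)) + ((2:ℕ) * x ^ (2-1)) • f x := by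
      simp only [hs1def, hg1def, Nat.cast_ofNat, pow_one]
      module
    rw [e]
    exact h
  have hs1d : ∀ x : ℝ, HasDerivAt s1 (s2 x) x := by
    intro x
    have hc1 : HasDerivAt (fun y : ℝ => 2*y) 2 x := by
      simpa using (hasDerivAt_id x).const_mul 2
    have hc2 : HasDerivAt (fun y : ℝ => -(2*y^3)) (-(6*x^2)) x := by
      have h3 := ((hasDerivAt_pow 3 x).const_mul 2).fun_neg
      exact h3.congr_deriv (by push_cast; ring)
    have h := (hc1.smul (hfd x)).add (hc2.smul (hg1d x))
    have e : s2 x = ((2*x) • ((-(2*x)) • (f x * f x)) + (2:ℝ) • f x) +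
        ((-(2*x^3)) • ((-(4*x)) • g2 x) + (-(6*x^2)) • g1 x) := by
      simp only [hs2def, hg1def, hg2def]
      module
    rw [e]
    exact h
  have hds0 : deriv s0 = s1 := funext fun x => (hs0d x).deriv
  have hds1 : deriv s1 = s2 := funext fun x => (hs1d x).deriv
  have hg1cont : Continuous g1 := hfcont.mul hfcont
  have hg2cont : Continuous g2 := hfcont.mul hg1cont
  have hs2cont : Continuous s2 := by
    rw [hs2def]
    refine Continuous.add (Continuous.add (continuous_const.smul (f := fun _ : ℝ => (2:ℝ)) hfcont) ?_) ?_
    · exact ((continuous_const.mul (continuous_pow 2)).neg).smul hg1cont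
    · exact (continuous_const.mul (continuous_pow 4)).smul hg2cont
  have hfeq : (fun ξ : ℝ => (ξ:ℂ)^2 • R ((ξ:ℂ)^2+lam)) = s0 := by
    funext ξ
    show (ξ:ℂ)^2 • f ξ = (ξ^2 : ℝ) • f ξ
    rw [← Complex.coe_smul]
    norm_cast
  have hcd : ContDiff ℝ 2 s0 := by
    rw [show (2 : WithTop ℕ∞) = 1 + 1 from by norm_num, contDiff_succ_iff_deriv]
    refine ⟨fun x => (hs0d x).differentiableAt, by simp, ?_⟩
    rw [hds0, show (1 : WithTop ℕ∞) = 0 + 1 from by norm_num, contDiff_succ_iff_deriv]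
    refine ⟨fun x => (hs1d x).differentiableAt, by simp, ?_⟩
    rw [hds1]
    exact contDiff_zero.mpr hs2cont
  rw [hfeq]
  refine ⟨hcd, ?_⟩
  intro k hk ξ
  have hB0 : (0:ℝ) ≤ ‖f ξ‖ := norm_nonneg _
  have ha : (0:ℝ) ≤ |ξ| := abs_nonneg ξ
  have hLξ := hL ξ
  have hg1n : ‖g1 ξ‖ ≤ ‖f ξ‖^2 := by
    calc ‖g1 ξ‖ ≤ ‖f ξ‖ * ‖f ξ‖ := norm_mul_le _ _
      _ = ‖f ξ‖^2 := (sq ‖f ξ‖).symm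
  have hg2n : ‖g2 ξ‖ ≤ ‖f ξ‖^3 := by
    calc ‖g2 ξ‖ ≤ ‖f ξ‖ * ‖g1 ξ‖ := norm_mul_le _ _
      _ ≤ ‖f ξ‖ * ‖f ξ‖^2 := by gcongr
      _ = ‖f ξ‖^3 := by ring
  have hsqL : ((1+|ξ|)^2 * ‖f ξ‖)^2 ≤ L^2 := pow_le_pow_left₀ (by positivity) hLξ 2
  have hcubeL : ((1+|ξ|)^2 * ‖f ξ‖)^3 ≤ L^3 := pow_le_pow_left₀ (by positivity) hLξ 3
  interval_cases k
  · simp only [pow_zero, one_mul, iteratedDeriv_zero]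
    have e : ‖s0 ξ‖ = ξ^2 * ‖f ξ‖ := by
      rw [show s0 ξ = (ξ^2 : ℝ) • f ξ from rfl, norm_smul (ξ^2 : ℝ) (f ξ),
        Real.norm_eq_abs, abs_of_nonneg (sq_nonneg ξ)]
    rw [e]
    nlinarith [mul_le_mul_of_nonneg_right
      (by nlinarith [sq_abs ξ] : ξ^2 ≤ (1+|ξ|)^2) hB0, sq_nonneg L, pow_pos hL0 3]
  · rw [iteratedDeriv_one, hds0]
    have hn : ‖s1 ξ‖ ≤ 2 * |ξ| * ‖f ξ‖ + 2 * |ξ| ^ 3 * ‖f ξ‖^2 := by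
      refine le_trans (norm_add_le ((2*ξ) • f ξ) ((-(2*ξ^3)) • g1 ξ)) ?_
      rw [norm_smul (2*ξ) (f ξ), norm_smul (-(2*ξ^3)) (g1 ξ), Real.norm_eq_abs, Real.norm_eq_abs]
      have e1 : |2*ξ| = 2 * |ξ| := by rw [abs_mul]; norm_num
      have e2 : |(-(2*ξ^3))| = 2 * |ξ| ^ 3 := by rw [abs_neg, abs_mul, abs_pow]; norm_num
      rw [e1, e2]
      gcongr
    have hstep : (1+|ξ|)^1 * (2 * |ξ| * ‖f ξ‖ + 2 * |ξ| ^ 3 * ‖f ξ‖^2) ≤ 2*L + 10*L^2 + 8*L^3 := by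
      have hA : (1+|ξ|) * |ξ| * ‖f ξ‖ ≤ (1+|ξ|)^2*‖f ξ‖ := by nlinarith
      have hB : (1+|ξ|) * |ξ| ^ 3 * ‖f ξ‖^2 ≤ ((1+|ξ|)^2*‖f ξ‖)^2 := by
        calc (1+|ξ|) * |ξ| ^ 3 * ‖f ξ‖^2 ≤ (1+|ξ|) * (1+|ξ|)^3 * ‖f ξ‖^2 := by
              gcongr <;> linarith
          _ = ((1+|ξ|)^2*‖f ξ‖)^2 := by ring
      nlinarith [pow_pos hL0 3, sq_nonneg L, hA, hB, hLξ, hsqL]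
    calc (1+|ξ|)^1 * ‖s1 ξ‖ ≤ (1+|ξ|)^1 * (2 * |ξ| * ‖f ξ‖ + 2 * |ξ| ^ 3 * ‖f ξ‖^2) :=
          mul_le_mul_of_nonneg_left hn (by positivity)
      _ ≤ 2*L + 10*L^2 + 8*L^3 := hstep
  · rw [iteratedDeriv_succ, iteratedDeriv_one, hds0, hds1]
    have hn : ‖s2 ξ‖ ≤ 2 * ‖f ξ‖ + 10 * |ξ| ^ 2 * ‖f ξ‖^2 + 8 * |ξ| ^ 4 * ‖f ξ‖^3 := by
      refine le_trans (norm_add_le ((2:ℝ) • f ξ + (-(10*ξ^2)) • g1 ξ) ((8*ξ^4) • g2 ξ)) ?_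
      refine add_le_add (le_trans (norm_add_le ((2:ℝ) • f ξ) ((-(10*ξ^2)) • g1 ξ)) (add_le_add ?_ ?_)) ?_
      · rw [norm_smul (2:ℝ) (f ξ), Real.norm_eq_abs]
        norm_num
      · rw [norm_smul (-(10*ξ^2)) (g1 ξ), Real.norm_eq_abs]
        have e : |(-(10*ξ^2))| = 10 * |ξ| ^ 2 := by rw [abs_neg, abs_mul, abs_pow]; norm_num
        rw [e]; gcongr
      · rw [norm_smul (8*ξ^4) (g2 ξ), Real.norm_eq_abs]
        have e : |(8*ξ^4 : ℝ)| = 8 * |ξ| ^ 4 := by rw [abs_mul, abs_pow]; norm_num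
        rw [e]; gcongr
    have hstep : (1+|ξ|)^2 * (2 * ‖f ξ‖ + 10 * |ξ| ^ 2 * ‖f ξ‖^2 + 8 * |ξ| ^ 4 * ‖f ξ‖^3) ≤ 2*L + 10*L^2 + 8*L^3 := by
      have hB : (1+|ξ|)^2 * (|ξ| ^ 2 * ‖f ξ‖^2) ≤ ((1+|ξ|)^2*‖f ξ‖)^2 := by
        calc (1+|ξ|)^2 * (|ξ| ^ 2 * ‖f ξ‖^2) ≤ (1+|ξ|)^2 * ((1+|ξ|)^2 * ‖f ξ‖^2) := by
              gcongr <;> linarith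
          _ = ((1+|ξ|)^2*‖f ξ‖)^2 := by ring
      have hC : (1+|ξ|)^2 * (|ξ| ^ 4 * ‖f ξ‖^3) ≤ ((1+|ξ|)^2*‖f ξ‖)^3 := by
        calc (1+|ξ|)^2 * (|ξ| ^ 4 * ‖f ξ‖^3) ≤ (1+|ξ|)^2 * ((1+|ξ|)^4 * ‖f ξ‖^3) := by
              gcongr <;> linarith
          _ = ((1+|ξ|)^2*‖f ξ‖)^3 := by ring
      nlinarith [hLξ, hsqL, hcubeL, hB, hC]
    calc (1+|ξ|)^2 * ‖s2 ξ‖ ≤ (1+|ξ|)^2 * (2 * ‖f ξ‖ + 10 * |ξ| ^ 2 * ‖f ξ‖^2 + 8 * |ξ| ^ 4 * ‖f ξ‖^3) :=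
          mul_le_mul_of_nonneg_left hn (by positivity)
      _ ≤ 2*L + 10*L^2 + 8*L^3 := hstep
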